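/- Let A, B, E be Banach spaces, let u : A → B be a linear isometric embedding and let t : A → E be a bounded linear operator. Then there exist a Banach space P, a linear isometric embedding u' : E → P and a bounded linear operator t' : B → P such that ‖t'‖ ≤ ‖t‖ and t' ∘ u = u' ∘ t. -/

import Mathlib

/-- A bundled Banach space over `ℝ`. -/
structure BanachSpace : Type (u + 1) where
  carrier : Type u
  [norm : NormedAddCommGroup carrier]
  [space : NormedSpace ℝ carrier]
  [complete : CompleteSpace carrier]

attribute [instance] BanachSpace.norm BanachSpace.space BanachSpace.complete

instance : CoeSort BanachSpace.{u} (Type u) := ⟨BanachSpace.carrier⟩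

theorem withLp_one_norm_eq {α β : Type*} [SeminormedAddCommGroup α]
    [SeminormedAddCommGroup β] (x : WithLp 1 (α × β)) : ‖x‖ = ‖x.fst‖ + ‖x.snd‖ := by
  rw [WithLp.prod_norm_eq_add (by norm_num)]
  norm_num

/-- Auxiliary version of the push-out construction for contractions. -/
theorem pushout_aux (A B E : BanachSpace.{u})
    (u : A →ₗᵢ[ℝ] B) (t : A.carrier →L[ℝ] E.carrier) (ht : ‖t‖ ≤ 1) :
    ∃ (P : BanachSpace.{u}) (u' : E.carrier →ₗᵢ[ℝ] P.carrier)
      (t' : B.carrier →L[ℝ] P.carrier),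
      ‖t'‖ ≤ 1 ∧ ∀ a : A.carrier, t' (u a) = u' (t a) := by
  classical
  -- the ℓ¹-sum of E and B
  let W := WithLp 1 (E.carrier × B.carrier)
  -- the graph-type map a ↦ (t a, -u a)
  let f : A.carrier →ₗ[ℝ] W :=
    (WithLp.linearEquiv 1 ℝ (E.carrier × B.carrier)).symm.toLinearMap ∘ₗ
      (t.toLinearMap.prod (-u.toLinearMap))
  let S : Submodule ℝ W := (LinearMap.range f).topologicalClosure
  haveI hSc : IsClosed (S : Set W) := Submodule.isClosed_topologicalClosure _
  -- embeddings of the two factors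
  let ιE : E.carrier →ₗ[ℝ] W :=
    (WithLp.linearEquiv 1 ℝ (E.carrier × B.carrier)).symm.toLinearMap ∘ₗ
      LinearMap.inl ℝ E.carrier B.carrier
  let ιB : B.carrier →ₗ[ℝ] W :=
    (WithLp.linearEquiv 1 ℝ (E.carrier × B.carrier)).symm.toLinearMap ∘ₗ
      LinearMap.inr ℝ E.carrier B.carrier
  have hιE : ∀ e : E.carrier, ((ιE e).fst = e ∧ (ιE e).snd = 0) := fun e => ⟨rfl, rfl⟩
  have hιB : ∀ b : B.carrier, ((ιB b).fst = 0 ∧ (ιB b).snd = b) := fun b => ⟨rfl, rfl⟩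
  -- the key lower estimate on translates of elements of S
  have key : ∀ (e : E.carrier) (z : W), z ∈ S → ‖e‖ ≤ ‖ιE e + z‖ := by
    intro e z hz
    have hsub : (LinearMap.range f : Set W) ⊆ {z : W | ‖e‖ ≤ ‖ιE e + z‖} := by
      rintro _ ⟨a, rfl⟩
      have h1 : (ιE e + f a).fst = e + t a := rfl
      have h2 : (ιE e + f a).snd = -(u a) := zero_add _
      have h3 : ‖ιE e + f a‖ = ‖e + t a‖ + ‖a‖ := by
        rw [withLp_one_norm_eq, h1, h2, norm_neg, u.norm_map]
      rw [Set.mem_setOf_eq, h3]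
      have hta : ‖t a‖ ≤ ‖a‖ := by
        calc ‖t a‖ ≤ ‖t‖ * ‖a‖ := t.le_opNorm a
        _ ≤ 1 * ‖a‖ := by gcongr
        _ = ‖a‖ := one_mul _
      calc ‖e‖ = ‖(e + t a) - t a‖ := by rw [add_sub_cancel_right]
      _ ≤ ‖e + t a‖ + ‖t a‖ := norm_sub_le _ _
      _ ≤ ‖e + t a‖ + ‖a‖ := by gcongr
    have hclosed : IsClosed {z : W | ‖e‖ ≤ ‖ιE e + z‖} :=
      isClosed_le continuous_const ((continuous_const.add continuous_id).norm)
    have : (S : Set W) ⊆ {z : W | ‖e‖ ≤ ‖ιE e + z‖} := by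
      rw [show (S : Set W) = closure (LinearMap.range f : Set W) from
        (LinearMap.range f).topologicalClosure_coe]
      exact closure_minimal hsub hclosed
    exact this hz
  -- the quotient Banach space
  let P : BanachSpace.{u} := BanachSpace.mk (W ⧸ S)
  -- the embedding of E into P is an isometry
  have hnormE : ∀ e : E.carrier, ‖(Submodule.Quotient.mk (ιE e) : W ⧸ S)‖ = ‖e‖ := by
    intro e
    refine le_antisymm ?_ ?_
    · calc ‖(Submodule.Quotient.mk (ιE e) : W ⧸ S)‖ ≤ ‖ιE e‖ :=
        Submodule.Quotient.norm_mk_le S _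
      _ = ‖e‖ := by rw [withLp_one_norm_eq, (hιE e).1, (hιE e).2, norm_zero, add_zero]
    · by_contra h
      push_neg at h
      obtain ⟨m, hm, hmn⟩ := Submodule.Quotient.norm_mk_lt
        (Submodule.Quotient.mk (ιE e) : W ⧸ S) (sub_pos.mpr h)
      have hz : m - ιE e ∈ S := (Submodule.Quotient.eq S).mp hm
      have : ‖e‖ ≤ ‖ιE e + (m - ιE e)‖ := key e _ hz
      rw [add_sub_cancel] at this
      have : ‖e‖ < ‖e‖ := lt_of_le_of_lt this (by linarith)
      exact lt_irrefl _ this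
  let u' : E.carrier →ₗᵢ[ℝ] P.carrier :=
    { toLinearMap := S.mkQ ∘ₗ ιE
      norm_map' := fun e => hnormE e }
  -- the operator from B to P
  have hb : ∀ b : B.carrier, ‖(S.mkQ ∘ₗ ιB) b‖ ≤ 1 * ‖b‖ := by
    intro b
    calc ‖(S.mkQ ∘ₗ ιB) b‖ ≤ ‖ιB b‖ := Submodule.Quotient.norm_mk_le S _
    _ = ‖b‖ := by rw [withLp_one_norm_eq, (hιB b).1, (hιB b).2, norm_zero, zero_add]
    _ = 1 * ‖b‖ := (one_mul _).symm
  let t' : B.carrier →L[ℝ] P.carrier := (S.mkQ ∘ₗ ιB).mkContinuous 1 hb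
  refine ⟨P, u', t', ?_, ?_⟩
  · exact (S.mkQ ∘ₗ ιB).mkContinuous_norm_le zero_le_one hb
  · intro a
    have hmem : ιB (u a) - ιE (t a) ∈ S := by
      have h1 : ιB (u a) - ιE (t a) = -(f a) := by
        refine (WithLp.ext_iff 1).mpr (Prod.ext ?_ ?_)
        · show (0 : E.carrier) - t a = -(t a)
          rw [zero_sub]
        · show u a - (0 : B.carrier) = -(-(u a))
          rw [sub_zero, neg_neg]
      rw [h1]
      exact S.neg_mem (Submodule.le_topologicalClosure _ ⟨a, rfl⟩)
    have : (Submodule.Quotient.mk (ιB (u a)) : W ⧸ S) =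
        Submodule.Quotient.mk (ιE (t a)) := (Submodule.Quotient.eq S).mpr hmem
    exact this

/-- The push-out construction: given a linear isometric embedding `u : A → B` and a bounded
linear operator `t : A → E` between Banach spaces, there are a Banach space `P`, a linear
isometric embedding `u' : E → P` and a bounded linear operator `t' : B → P` with
`‖t'‖ ≤ ‖t‖` and `t' ∘ u = u' ∘ t`. -/
theorem pushout_construction (A B E : BanachSpace.{u})
    (u : A →ₗᵢ[ℝ] B) (t : A.carrier →L[ℝ] E.carrier) :
    ∃ (P : BanachSpace.{u}) (u' : E.carrier →ₗᵢ[ℝ] P.carrier)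
      (t' : B.carrier →L[ℝ] P.carrier),
      ‖t'‖ ≤ ‖t‖ ∧ ∀ a : A.carrier, t' (u a) = u' (t a) := by
  rcases eq_or_ne t 0 with rfl | htz
  · exact ⟨E, LinearIsometry.id, 0, by simp, fun a => by simp⟩
  · have hT : 0 < ‖t‖ := norm_pos_iff.mpr htz
    obtain ⟨P, u', s', hs', hcomm⟩ := pushout_aux A B E u (‖t‖⁻¹ • t)
      (by rw [norm_smul (α := ℝ) ‖t‖⁻¹ t, norm_inv, norm_norm, inv_mul_cancel₀ hT.ne'])
    refine ⟨P, u', ‖t‖ • s', ?_, ?_⟩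
    · have h1 : ‖‖t‖ • s'‖ = ‖t‖ * ‖s'‖ := by
        rw [norm_smul (α := ℝ) ‖t‖ s', Real.norm_eq_abs, abs_of_pos hT]
      calc ‖‖t‖ • s'‖ = ‖t‖ * ‖s'‖ := h1
      _ ≤ ‖t‖ * 1 := by gcongr
      _ = ‖t‖ := mul_one _
    · intro a
      have := hcomm a
      calc (‖t‖ • s') (u a) = ‖t‖ • s' (u a) := rfl
      _ = ‖t‖ • u' ((‖t‖⁻¹ • t) a) := by rw [this]
      _ = u' (‖t‖ • (‖t‖⁻¹ • t) a) := (u'.map_smul _ _).symm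
      _ = u' (t a) := by
        congr 1
        show ‖t‖ • ‖t‖⁻¹ • t a = t a
        rw [smul_smul, mul_inv_cancel₀ hT.ne', one_smul]
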